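/- (Uniqueness for the monotone ODE-type backward equation.) Let d₁ : [0,T] → ℝ be integrable and f : [0,T] × ℝ → ℝ satisfy (y₁ − y₂)(f(s,y₁) − f(s,y₂)) ≤ −d₁(s)|y₁ − y₂|² for a.e. s. If y¹, y² : [0,T] → ℝ are absolutely continuous functions with yⁱ(t) = ξ + ∫_t^T f(s, yⁱ(s)) ds for i = 1, 2, then y¹ = y². -/

import Mathlib

open MeasureTheory intervalIntegral


open MeasureTheory

/-- Square of an integral as twice the integral against the tail primitive. -/
lemma sq_integral_tail (g : ℝ → ℝ) (t T : ℝ)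
    (hg : IntegrableOn g (Set.Ioc t T)) :
    (∫ s in Set.Ioc t T, g s) ^ 2
      = 2 * ∫ s in Set.Ioc t T, g s * ∫ r in Set.Ioc s T, g r := by
  set μ := volume.restrict (Set.Ioc t T) with hμ
  have hgi : Integrable g μ := hg
  have hprod : Integrable (fun p : ℝ × ℝ => g p.1 * g p.2) (μ.prod μ) :=
    hgi.mul_prod hgi
  have hA : MeasurableSet {p : ℝ × ℝ | p.1 < p.2} :=
    measurableSet_lt measurable_fst measurable_snd
  have hB : MeasurableSet {p : ℝ × ℝ | p.2 < p.1} :=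
    measurableSet_lt measurable_snd measurable_fst
  have hD : MeasurableSet {p : ℝ × ℝ | p.1 = p.2} :=
    measurableSet_eq_fun measurable_fst measurable_snd
  set F : ℝ × ℝ → ℝ := ({p : ℝ × ℝ | p.1 < p.2}).indicator
    (fun p => g p.1 * g p.2) with hF
  set G : ℝ × ℝ → ℝ := ({p : ℝ × ℝ | p.2 < p.1}).indicator
    (fun p => g p.1 * g p.2) with hG
  set D : ℝ × ℝ → ℝ := ({p : ℝ × ℝ | p.1 = p.2}).indicator
    (fun p => g p.1 * g p.2) with hD'
  have hFi : Integrable F (μ.prod μ) := hprod.indicator hA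
  have hGi : Integrable G (μ.prod μ) := hprod.indicator hB
  have hDi : Integrable D (μ.prod μ) := hprod.indicator hD
  -- diagonal is null
  have hdiagnull : (μ.prod μ) {p : ℝ × ℝ | p.1 = p.2} = 0 := by
    rw [Measure.prod_apply hD]
    have : ∀ x : ℝ, μ (Prod.mk x ⁻¹' {p : ℝ × ℝ | p.1 = p.2}) = 0 := by
      intro x
      have : Prod.mk x ⁻¹' {p : ℝ × ℝ | p.1 = p.2} = {x} := by
        ext y; simp [eq_comm]
      rw [this]
      exact le_antisymm (le_trans (Measure.restrict_apply_le _ _)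
        (by simp)) zero_le
    simp [this]
  have hDzero : ∫ p, D p ∂(μ.prod μ) = 0 := by
    rw [hD', MeasureTheory.integral_indicator hD, Measure.restrict_eq_zero.mpr hdiagnull,
      integral_zero_measure]
  -- pointwise decomposition
  have hdecomp : (fun p : ℝ × ℝ => g p.1 * g p.2) = fun p => F p + G p + D p := by
    funext p
    rcases lt_trichotomy p.1 p.2 with h | h | h
    · simp [hF, hG, hD', Set.indicator_apply, h, ne_of_lt h, not_lt.mpr (le_of_lt h)]
    · simp [hF, hG, hD', Set.indicator_apply, h, lt_irrefl]
    · simp [hF, hG, hD', Set.indicator_apply, h, ne_of_gt h, not_lt.mpr (le_of_lt h)]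
  -- G and F have equal integrals, by swapping
  have hswap : ∫ p, G p ∂(μ.prod μ) = ∫ p, F p ∂(μ.prod μ) := by
    have : ∀ p : ℝ × ℝ, G p = F (Prod.swap p) := by
      intro p
      simp only [hF, hG, Set.indicator_apply, Set.mem_setOf_eq, Prod.fst_swap,
        Prod.snd_swap]
      by_cases h : p.2 < p.1 <;> simp [h, mul_comm]
    calc ∫ p, G p ∂(μ.prod μ) = ∫ p, F p.swap ∂(μ.prod μ) := by
          simp_rw [this]
      _ = ∫ p, F p ∂(μ.prod μ) := integral_prod_swap F
  -- total integral is the square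
  have htot : ∫ p, g p.1 * g p.2 ∂(μ.prod μ) = (∫ s in Set.Ioc t T, g s) ^ 2 := by
    rw [hμ, integral_prod_mul g g]; ring
  have hsum : ∫ p, g p.1 * g p.2 ∂(μ.prod μ)
      = (∫ p, F p ∂(μ.prod μ)) + (∫ p, G p ∂(μ.prod μ)) + ∫ p, D p ∂(μ.prod μ) := by
    have hFG : Integrable (fun p : ℝ × ℝ => F p + G p) (μ.prod μ) := hFi.add hGi
    rw [hdecomp, integral_add hFG hDi, integral_add hFi hGi]
  -- compute ∫ F via Fubini
  have hFval : ∫ p, F p ∂(μ.prod μ)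
      = ∫ s in Set.Ioc t T, g s * ∫ r in Set.Ioc s T, g r := by
    rw [integral_prod F hFi, hμ]
    apply setIntegral_congr_fun measurableSet_Ioc
    intro s hs
    show ∫ r, F (s, r) ∂μ = g s * ∫ r in Set.Ioc s T, g r
    have hFs : (fun r => F (s, r)) = (Set.Ioi s).indicator (fun r => g s * g r) := by
      funext r; simp [hF, Set.indicator_apply, Set.mem_Ioi]
    rw [hFs, MeasureTheory.integral_indicator measurableSet_Ioi, hμ,
      Measure.restrict_restrict measurableSet_Ioi]
    have : Set.Ioi s ∩ Set.Ioc t T = Set.Ioc s T := by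
      ext r
      simp only [Set.mem_inter_iff, Set.mem_Ioi, Set.mem_Ioc]
      constructor
      · rintro ⟨h1, _, h3⟩; exact ⟨h1, h3⟩
      · rintro ⟨h1, h2⟩; exact ⟨h1, lt_trans hs.1 h1, h2⟩
    rw [this, MeasureTheory.integral_const_mul]
  linarith [htot, hsum, hswap, hFval, hDzero]


open MeasureTheory

/-- If `u` is continuous nonneg on `[0,T]`, `u = 0` on `[a,T]`, and the mass of `K`
on `(b,a]` is at most `1/2`, then `u = 0` on `[b,a]`. -/
lemma gronwall_step (T : ℝ) (K u : ℝ → ℝ)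
    (hK : IntegrableOn K (Set.Icc 0 T)) (hK0 : ∀ s, 0 ≤ K s)
    (hu : ContinuousOn u (Set.Icc 0 T)) (hu0 : ∀ t ∈ Set.Icc 0 T, 0 ≤ u t)
    (hineq : ∀ t ∈ Set.Icc 0 T, u t ≤ ∫ s in Set.Ioc t T, K s * u s)
    (b a : ℝ) (hb : 0 ≤ b) (hba : b ≤ a) (haT : a ≤ T)
    (hzero : ∀ s ∈ Set.Icc a T, u s = 0)
    (hsmall : (∫ s in Set.Ioc b a, K s) ≤ 1 / 2) :
    ∀ t ∈ Set.Icc b a, u t = 0 := by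
  have hsub : Set.Icc b a ⊆ Set.Icc 0 T :=
    Set.Icc_subset_Icc hb haT
  have hne : (Set.Icc b a).Nonempty := Set.nonempty_Icc.mpr hba
  obtain ⟨t₀, ht₀mem, ht₀max⟩ :=
    isCompact_Icc.exists_isMaxOn hne (hu.mono hsub)
  set M := u t₀ with hM
  have hM0 : 0 ≤ M := hu0 t₀ (hsub ht₀mem)
  -- integrability of K * u on subsets of [0,T]
  obtain ⟨C, hC⟩ := isCompact_Icc.exists_bound_of_continuousOn hu
  have huae : AEStronglyMeasurable u (volume.restrict (Set.Icc 0 T)) :=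
    hu.aestronglyMeasurable measurableSet_Icc
  have hKu : IntegrableOn (fun s => K s * u s) (Set.Icc 0 T) := by
    apply Integrable.mono' (hK.abs.const_mul C)
    · exact hK.aestronglyMeasurable.mul huae
    · refine (ae_restrict_iff' measurableSet_Icc).mpr (.of_forall fun s hs => ?_)
      have h1 : |u s| ≤ C := by simpa using hC s hs
      have h2 : ‖K s * u s‖ = |K s| * |u s| := by rw [Real.norm_eq_abs, abs_mul]
      rw [h2]
      calc |K s| * |u s| ≤ |K s| * C := mul_le_mul_of_nonneg_left h1 (abs_nonneg _)
        _ = C * |K s| := mul_comm _ _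
  intro t htmem
  -- pointwise estimate u t ≤ M / 2 for all t in [b,a]
  have key : ∀ t ∈ Set.Icc b a, u t ≤ M / 2 := by
    intro t ht
    have htT : t ≤ T := le_trans ht.2 haT
    have ht0 : 0 ≤ t := le_trans hb ht.1
    have hsplit : Set.Ioc t T = Set.Ioc t a ∪ Set.Ioc a T :=
      (Set.Ioc_union_Ioc_eq_Ioc ht.2 haT).symm
    have hKu1 : IntegrableOn (fun s => K s * u s) (Set.Ioc t a) :=
      hKu.mono_set (fun s hs => ⟨le_trans ht0 (le_of_lt hs.1), le_trans hs.2 haT⟩)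
    have hKu2 : IntegrableOn (fun s => K s * u s) (Set.Ioc a T) :=
      hKu.mono_set (fun s hs => ⟨le_trans (le_trans hb hba) (le_of_lt hs.1), hs.2⟩)
    have hI2 : ∫ s in Set.Ioc a T, K s * u s = 0 := by
      apply setIntegral_eq_zero_of_forall_eq_zero
      intro s hs
      rw [hzero s ⟨le_of_lt hs.1, hs.2⟩, mul_zero]
    have hI1 : ∫ s in Set.Ioc t a, K s * u s ≤ M / 2 := by
      have hle : ∫ s in Set.Ioc t a, K s * u s ≤ ∫ s in Set.Ioc t a, K s * M := by
        apply setIntegral_mono_on hKu1 ((hK.mono_set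
          (fun s hs => ⟨le_trans ht0 (le_of_lt hs.1), le_trans hs.2 haT⟩)).mul_const M)
          measurableSet_Ioc
        intro s hs
        exact mul_le_mul_of_nonneg_left
          (ht₀max ⟨le_trans ht.1 (le_of_lt hs.1), hs.2⟩) (hK0 s)
      have hKmono : ∫ s in Set.Ioc t a, K s ≤ ∫ s in Set.Ioc b a, K s := by
        apply setIntegral_mono_set (hK.mono_set
          (fun s hs => ⟨le_trans hb (le_of_lt hs.1), le_trans hs.2 haT⟩))
          (.of_forall hK0)
        exact HasSubset.Subset.eventuallyLE (Set.Ioc_subset_Ioc_left ht.1)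
      calc ∫ s in Set.Ioc t a, K s * u s ≤ ∫ s in Set.Ioc t a, K s * M := hle
        _ = (∫ s in Set.Ioc t a, K s) * M := by rw [MeasureTheory.integral_mul_const]
        _ ≤ (1 / 2) * M := by
            apply mul_le_mul_of_nonneg_right _ hM0
            exact le_trans hKmono hsmall
        _ = M / 2 := by ring
    calc u t ≤ ∫ s in Set.Ioc t T, K s * u s := hineq t ⟨ht0, htT⟩
      _ = (∫ s in Set.Ioc t a, K s * u s) + ∫ s in Set.Ioc a T, K s * u s := by
          rw [hsplit, setIntegral_union (Set.Ioc_disjoint_Ioc_of_le le_rfl) measurableSet_Ioc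
            hKu1 hKu2]
      _ ≤ M / 2 := by rw [hI2]; linarith
  have hMle : M ≤ M / 2 := key t₀ ht₀mem
  have : M ≤ 0 := by linarith
  have := key t htmem
  have := hu0 t (hsub htmem)
  linarith


open MeasureTheory

lemma gronwall_zero (T : ℝ) (hT : 0 < T) (K u : ℝ → ℝ)
    (hK : IntegrableOn K (Set.Icc 0 T)) (hK0 : ∀ s, 0 ≤ K s)
    (hu : ContinuousOn u (Set.Icc 0 T)) (hu0 : ∀ t ∈ Set.Icc 0 T, 0 ≤ u t)
    (hineq : ∀ t ∈ Set.Icc 0 T, u t ≤ ∫ s in Set.Ioc t T, K s * u s) :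
    ∀ t ∈ Set.Icc 0 T, u t = 0 := by
  -- primitive of K and its uniform continuity
  set P : ℝ → ℝ := fun x => ∫ s in Set.Ioc 0 x, K s with hP
  have hPc : ContinuousOn P (Set.Icc 0 T) := intervalIntegral.continuousOn_primitive hK
  have hPu : UniformContinuousOn P (Set.Icc 0 T) :=
    isCompact_Icc.uniformContinuousOn_of_continuous hPc
  obtain ⟨δ, hδ0, hδ⟩ := (Metric.uniformContinuousOn_iff.mp hPu) (1/2) (by norm_num)
  -- mass of K on short intervals is small
  have hmass : ∀ b a : ℝ, 0 ≤ b → b ≤ a → a ≤ T → a - b < δ →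
      (∫ s in Set.Ioc b a, K s) ≤ 1 / 2 := by
    intro b a hb hba haT hlt
    have hbmem : b ∈ Set.Icc (0:ℝ) T := ⟨hb, le_trans hba haT⟩
    have hamem : a ∈ Set.Icc (0:ℝ) T := ⟨le_trans hb hba, haT⟩
    have hdist : dist a b < δ := by
      rw [Real.dist_eq, abs_of_nonneg (by linarith)]; exact hlt
    have h12 : dist (P a) (P b) < 1/2 := hδ a hamem b hbmem hdist
    have hKb : IntegrableOn K (Set.Ioc 0 b) :=
      hK.mono_set (fun s hs => ⟨le_of_lt hs.1, le_trans hs.2 (le_trans hba haT)⟩)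
    have hKa : IntegrableOn K (Set.Ioc b a) :=
      hK.mono_set (fun s hs => ⟨le_trans hb (le_of_lt hs.1), le_trans hs.2 haT⟩)
    have hPsplit : P a = P b + ∫ s in Set.Ioc b a, K s := by
      have hunion : Set.Ioc (0:ℝ) b ∪ Set.Ioc b a = Set.Ioc 0 a :=
        Set.Ioc_union_Ioc_eq_Ioc hb hba
      rw [hP]
      simp only
      rw [← hunion, setIntegral_union (Set.Ioc_disjoint_Ioc_of_le le_rfl) measurableSet_Ioc hKb hKa]
    have : (∫ s in Set.Ioc b a, K s) = P a - P b := by linarith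
    rw [this]
    calc P a - P b ≤ |P a - P b| := le_abs_self _
      _ = dist (P a) (P b) := (Real.dist_eq _ _).symm
      _ ≤ 1/2 := le_of_lt h12
  -- backward induction over steps of length δ/2
  have hstep : ∀ n : ℕ, ∀ t ∈ Set.Icc 0 T, T - n * (δ/2) ≤ t → u t = 0 := by
    intro n
    induction n with
    | zero =>
      intro t ht hle
      have htT : t = T := le_antisymm ht.2 (by simpa using hle)
      subst htT
      have h1 := hineq t ht
      rw [Set.Ioc_self, Measure.restrict_empty, integral_zero_measure] at h1
      exact le_antisymm h1 (hu0 t ht)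
    | succ n ih =>
      intro t ht hle
      by_cases hcase : T - (n:ℝ) * (δ/2) ≤ t
      · exact ih t ht hcase
      · push_neg at hcase
        obtain ⟨a, ha⟩ : ∃ a : ℝ, a = T - (n:ℝ) * (δ/2) := ⟨_, rfl⟩
        have haT : a ≤ T := by
          have h0 : (0:ℝ) ≤ (n:ℝ) * (δ/2) := by positivity
          linarith
        have hta : t ≤ a := by linarith
        have hzero : ∀ s ∈ Set.Icc a T, u s = 0 := by
          intro s hs
          exact ih s ⟨le_trans (le_trans ht.1 hta) hs.1, hs.2⟩ (by linarith [hs.1])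
        have hsmall : (∫ s in Set.Ioc t a, K s) ≤ 1 / 2 := by
          apply hmass t a ht.1 hta haT
          have h1 : T - ((n:ℝ) + 1) * (δ/2) ≤ t := by push_cast at hle; linarith
          have h2 : a = T - (n:ℝ) * (δ/2) := ha
          linarith
        exact gronwall_step T K u hK hK0 hu hu0 hineq t a ht.1 hta haT hzero hsmall
          t ⟨le_refl t, hta⟩
  intro t ht
  obtain ⟨n, hn⟩ := exists_nat_ge ((T - t) / (δ/2))
  apply hstep n t ht
  have h2 : 0 < δ/2 := by linarith
  have := (div_le_iff₀ h2).mp hn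
  linarith


/-- Uniqueness for the monotone backward integral equation
`y(t) = ξ + ∫_t^T f(s, y(s)) ds` under the one-sided monotonicity condition
`(y₁ - y₂)(f(s,y₁) - f(s,y₂)) ≤ -d₁(s) |y₁ - y₂|²`. -/
theorem monotone_backward_equation_unique
    (T : ℝ) (hT : 0 < T) (ξ : ℝ)
    (d₁ : ℝ → ℝ) (hd₁ : IntegrableOn d₁ (Set.Icc 0 T))
    (f : ℝ → ℝ → ℝ)
    (hmono : ∀ᵐ s ∂(volume.restrict (Set.Icc (0 : ℝ) T)),
      ∀ y₁ y₂ : ℝ, (y₁ - y₂) * (f s y₁ - f s y₂) ≤ -d₁ s * (y₁ - y₂) ^ 2)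
    (y₁ y₂ : ℝ → ℝ)
    (hc₁ : ContinuousOn y₁ (Set.Icc 0 T)) (hc₂ : ContinuousOn y₂ (Set.Icc 0 T))
    (hint₁ : IntegrableOn (fun s => f s (y₁ s)) (Set.Icc 0 T))
    (hint₂ : IntegrableOn (fun s => f s (y₂ s)) (Set.Icc 0 T))
    (h₁ : ∀ t ∈ Set.Icc (0 : ℝ) T, y₁ t = ξ + ∫ s in t..T, f s (y₁ s))
    (h₂ : ∀ t ∈ Set.Icc (0 : ℝ) T, y₂ t = ξ + ∫ s in t..T, f s (y₂ s)) :
    ∀ t ∈ Set.Icc (0 : ℝ) T, y₁ t = y₂ t := by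
  set z : ℝ → ℝ := fun t => y₁ t - y₂ t with hz
  set g : ℝ → ℝ := fun s => f s (y₁ s) - f s (y₂ s) with hg
  have hgi : IntegrableOn g (Set.Icc 0 T) := hint₁.sub hint₂
  have hzc : ContinuousOn z (Set.Icc 0 T) := hc₁.sub hc₂
  -- representation of z as a tail integral
  have hzrep : ∀ t ∈ Set.Icc (0:ℝ) T, z t = ∫ s in Set.Ioc t T, g s := by
    intro t ht
    have hsub : Set.uIcc t T ⊆ Set.Icc 0 T := by
      rw [Set.uIcc_of_le ht.2]
      exact Set.Icc_subset_Icc ht.1 le_rfl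
    have hI1 : IntervalIntegrable (fun s => f s (y₁ s)) volume t T :=
      (hint₁.mono_set hsub).intervalIntegrable
    have hI2 : IntervalIntegrable (fun s => f s (y₂ s)) volume t T :=
      (hint₂.mono_set hsub).intervalIntegrable
    calc z t = (ξ + ∫ s in t..T, f s (y₁ s)) - (ξ + ∫ s in t..T, f s (y₂ s)) := by
          rw [hz]; simp only; rw [← h₁ t ht, ← h₂ t ht]
      _ = (∫ s in t..T, f s (y₁ s)) - ∫ s in t..T, f s (y₂ s) := by ring
      _ = ∫ s in t..T, g s := (intervalIntegral.integral_sub hI1 hI2).symm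
      _ = ∫ s in Set.Ioc t T, g s := intervalIntegral.integral_of_le ht.2
  -- coefficient and squared difference
  set K : ℝ → ℝ := fun s => 2 * |d₁ s| with hK
  have hK0 : ∀ s, 0 ≤ K s := fun s => by positivity
  have hKi : IntegrableOn K (Set.Icc 0 T) := hd₁.abs.const_mul 2
  set u : ℝ → ℝ := fun t => (z t) ^ 2 with hu
  have huc : ContinuousOn u (Set.Icc 0 T) := hzc.pow 2
  have hu0 : ∀ t ∈ Set.Icc (0:ℝ) T, 0 ≤ u t := fun t _ => sq_nonneg _
  obtain ⟨C, hC⟩ := isCompact_Icc.exists_bound_of_continuousOn hzc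
  have hC0 : 0 ≤ C := le_trans (norm_nonneg _) (hC 0 ⟨le_rfl, le_of_lt hT⟩)
  have hzae : AEStronglyMeasurable z (volume.restrict (Set.Icc 0 T)) :=
    hzc.aestronglyMeasurable measurableSet_Icc
  -- the Gronwall inequality for u
  have hineq : ∀ t ∈ Set.Icc (0:ℝ) T, u t ≤ ∫ s in Set.Ioc t T, K s * u s := by
    intro t ht
    have hsubIoc : Set.Ioc t T ⊆ Set.Icc 0 T :=
      fun s hs => ⟨le_trans ht.1 (le_of_lt hs.1), hs.2⟩
    have hres : volume.restrict (Set.Ioc t T) ≤ volume.restrict (Set.Icc 0 T) :=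
      Measure.restrict_mono hsubIoc le_rfl
    have hgIoc : IntegrableOn g (Set.Ioc t T) := hgi.mono_set hsubIoc
    have hid := sq_integral_tail g t T hgIoc
    have hcongr : ∫ s in Set.Ioc t T, g s * ∫ r in Set.Ioc s T, g r
        = ∫ s in Set.Ioc t T, g s * z s := by
      apply setIntegral_congr_fun measurableSet_Ioc
      intro s hs
      show g s * (∫ r in Set.Ioc s T, g r) = g s * z s
      rw [hzrep s (hsubIoc hs)]
    -- integrability of the two integrands
    have hL : Integrable (fun s => 2 * (g s * z s))
        (volume.restrict (Set.Ioc t T)) := by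
      apply Integrable.mono' (hgIoc.abs.const_mul (2 * C))
      · exact ((hgIoc.aestronglyMeasurable.mul
          (hzae.mono_measure hres)).const_mul 2)
      · refine (ae_restrict_iff' measurableSet_Ioc).mpr (.of_forall fun s hs => ?_)
        have h1 : |z s| ≤ C := by simpa using hC s (hsubIoc hs)
        have h2 : ‖2 * (g s * z s)‖ = 2 * (|g s| * |z s|) := by
          rw [Real.norm_eq_abs, abs_mul, abs_mul]; norm_num
        rw [h2]
        calc 2 * (|g s| * |z s|) ≤ 2 * (|g s| * C) := by
              apply mul_le_mul_of_nonneg_left _ (by norm_num)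
              exact mul_le_mul_of_nonneg_left h1 (abs_nonneg _)
          _ = 2 * C * |g s| := by ring
    have hR : Integrable (fun s => K s * u s)
        (volume.restrict (Set.Ioc t T)) := by
      apply Integrable.mono' (((hKi.mono_set hsubIoc).abs.const_mul (C ^ 2)))
      · exact (hKi.mono_set hsubIoc).aestronglyMeasurable.mul
          ((huc.aestronglyMeasurable measurableSet_Icc).mono_measure hres)
      · refine (ae_restrict_iff' measurableSet_Ioc).mpr (.of_forall fun s hs => ?_)
        have h1 : |z s| ≤ C := by simpa using hC s (hsubIoc hs)
        have h2 : u s ≤ C ^ 2 := by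
          rw [hu]; simp only
          nlinarith [abs_nonneg (z s), sq_abs (z s)]
        have h3 : ‖K s * u s‖ = K s * u s := by
          rw [Real.norm_eq_abs, abs_of_nonneg (mul_nonneg (hK0 s) (sq_nonneg _))]
        rw [h3]
        calc K s * u s ≤ K s * C ^ 2 := mul_le_mul_of_nonneg_left h2 (hK0 s)
          _ = C ^ 2 * |K s| := by
              rw [abs_of_nonneg (hK0 s)]; ring
    -- a.e. pointwise comparison
    have hmono' : ∀ᵐ s ∂(volume.restrict (Set.Ioc t T)),
        ∀ a b : ℝ, (a - b) * (f s a - f s b) ≤ -d₁ s * (a - b) ^ 2 :=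
      ae_mono hres hmono
    have hae : (fun s => 2 * (g s * z s)) ≤ᵐ[volume.restrict (Set.Ioc t T)]
        fun s => K s * u s := by
      filter_upwards [hmono'] with s hs
      have h1 : z s * g s ≤ -d₁ s * (z s) ^ 2 := hs (y₁ s) (y₂ s)
      have h2 : -d₁ s * (z s) ^ 2 ≤ |d₁ s| * (z s) ^ 2 :=
        mul_le_mul_of_nonneg_right (neg_le_abs (d₁ s)) (sq_nonneg (z s))
      show 2 * (g s * z s) ≤ 2 * |d₁ s| * (z s ^ 2)
      nlinarith [h1, h2]
    calc u t = (∫ s in Set.Ioc t T, g s) ^ 2 := by rw [hu]; simp only; rw [hzrep t ht]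
      _ = 2 * ∫ s in Set.Ioc t T, g s * z s := by rw [hid, hcongr]
      _ = ∫ s in Set.Ioc t T, 2 * (g s * z s) := (MeasureTheory.integral_const_mul (2:ℝ) _).symm
      _ ≤ ∫ s in Set.Ioc t T, K s * u s := integral_mono_ae hL hR hae
  -- conclude
  have hzero := gronwall_zero T hT K u hKi hK0 huc hu0 hineq
  intro t ht
  have h4 : u t = 0 := hzero t ht
  have h5 : z t = 0 := by
    rw [hu] at h4
    simpa using pow_eq_zero_iff (n := 2) (by norm_num) |>.mp h4
  have := sub_eq_zero.mp h5
  simpa [hz] using this
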